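/- Let d = k·h for integers k ≥ 1, h ≥ 1, let v ∈ ℝ^{kh} be assigned to cluster j, and let δ ∈ ℝ^{kh} be split into a first block δ¹ = (δ_1, …, δ_h) and a second block δ² = (δ_{h+1}, …, δ_{kh}). Suppose that for every cluster index j' ≠ j both partial sums are nonnegative: Σ_{i=1}^{h} δ_i · (e_j − e_{j'})_i ≥ 0 and Σ_{i=h+1}^{kh} δ_i · (e_j − e_{j'})_i ≥ 0. Then v + δ is assigned to the same cluster j as v. -/

import Mathlib

open scoped RealInnerProductSpace

/-- `v` is assigned to cluster `j` iff its inner product with centroid `e j`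
strictly exceeds the inner product with every other centroid. -/
def assignedToCluster {d C : ℕ} (e : Fin C → EuclideanSpace ℝ (Fin d))
    (v : EuclideanSpace ℝ (Fin d)) (j : Fin C) : Prop :=
  ∀ j' : Fin C, j' ≠ j → ⟪v, e j⟫ > ⟪v, e j'⟫

theorem directional_perturbation_blocks {k h C : ℕ} (hk : 1 ≤ k) (hh : 1 ≤ h) (hC : 1 ≤ C)
    (e : Fin C → EuclideanSpace ℝ (Fin (k * h)))
    (v δ : EuclideanSpace ℝ (Fin (k * h))) (j : Fin C)
    (hv : assignedToCluster e v j)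
    (hblock1 : ∀ j' : Fin C, j' ≠ j →
      0 ≤ ∑ i ∈ Finset.univ.filter (fun i : Fin (k * h) => (i : ℕ) < h),
        δ i * (e j i - e j' i))
    (hblock2 : ∀ j' : Fin C, j' ≠ j →
      0 ≤ ∑ i ∈ Finset.univ.filter (fun i : Fin (k * h) => h ≤ (i : ℕ)),
        δ i * (e j i - e j' i)) :
    assignedToCluster e (v + δ) j := by
  intro j' hj'
  have hvj := hv j' hj'
  have hsum : 0 ≤ ∑ i : Fin (k * h), δ i * (e j i - e j' i) := by
    rw [← Finset.sum_filter_add_sum_filter_not Finset.univ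
      (fun i : Fin (k * h) => (i : ℕ) < h)]
    have h2 := hblock2 j' hj'
    simp only [not_lt] at *
    exact add_nonneg (hblock1 j' hj') h2
  have hd : ⟪δ, e j'⟫ ≤ ⟪δ, e j⟫ := by
    simp only [PiLp.inner_apply, RCLike.inner_apply, conj_trivial]
    have : ∑ i : Fin (k * h), δ i * (e j i - e j' i)
        = (∑ i : Fin (k * h), δ i * e j i) - ∑ i : Fin (k * h), δ i * e j' i := by
      rw [← Finset.sum_sub_distrib]
      exact Finset.sum_congr rfl fun i _ => by ring
    have hc : ∀ c : Fin C, ∑ x : Fin (k * h), e c x * δ x = ∑ x : Fin (k * h), δ x * e c x :=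
      fun c => Finset.sum_congr rfl fun x _ => mul_comm _ _
    linarith [hsum, this ▸ hsum, hc j, hc j']
  simp only [inner_add_left]
  linarith
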